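/- Any 0-intersecting hypergraph (every two edges intersect) in which every edge has at least 2 vertices is properly 3-colorable: there exists a coloring of the vertices with 3 colors such that no edge is monochromatic. -/
import Mathlib


/-- Any 0-intersecting hypergraph (every two edges intersect) in which every edge
has at least 2 vertices is properly 3-colorable. -/
theorem stmt0 {V : Type*} [Fintype V] [DecidableEq V]
    (H : Finset (Finset V))
    (hint : ∀ A ∈ H, ∀ B ∈ H, (A ∩ B).Nonempty)
    (hcard : ∀ A ∈ H, 2 ≤ A.card) :
    ∃ χ : V → Fin 3, ∀ A ∈ H, ∃ u ∈ A, ∃ w ∈ A, χ u ≠ χ w := by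
  rcases H.eq_empty_or_nonempty with rfl | hne
  · exact ⟨fun _ => 0, fun A hA => absurd hA (Finset.notMem_empty A)⟩
  obtain ⟨M, hM, hmin⟩ := H.exists_min_image Finset.card hne
  have hM2 : 2 ≤ M.card := hcard M hM
  obtain ⟨x, hx⟩ : M.Nonempty := Finset.card_pos.mp (by omega)
  refine ⟨fun v => if v = x then 0 else if v ∈ M then 1 else 2, fun A hA => ?_⟩
  by_cases hAM : A = M
  · subst hAM
    obtain ⟨y, hy, hyx⟩ := Finset.exists_mem_ne (lt_of_lt_of_le one_lt_two hM2) x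
    refine ⟨x, hx, y, hy, ?_⟩
    simp [hyx, hy]
  · -- A has a vertex outside M and a vertex in M
    have hsub : ¬ A ⊆ M := by
      intro hsub
      have : A ⊂ M := hsub.ssubset_of_ne hAM
      exact absurd (hmin A hA) (not_le.mpr (Finset.card_lt_card this))
    obtain ⟨z, hzA, hzM⟩ := Finset.not_subset.mp hsub
    obtain ⟨u, hu⟩ := hint A hA M hM
    rw [Finset.mem_inter] at hu
    refine ⟨u, hu.1, z, hzA, ?_⟩
    have hzx : z ≠ x := fun h => hzM (h ▸ hx)
    by_cases hux : u = x <;> simp [hux, hzx, hzM, hu.2]
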